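/- For integers k > ℓ ≥ 2, the number log α(k) / log α(ℓ) is irrational, where α(s) denotes the dominant root of Ψ_s(x) = x^s − x^(s−1) − ... − x − 1. -/

import Mathlib

open Polynomial Filter

private lemma hasDerivAt_g (s : ℕ) (hs : 1 ≤ s) (t : ℝ) :
    HasDerivAt (fun t : ℝ => (2 - t)^s * t) ((2 - t)^(s-1) * (2 - (s+1) * t)) t := by
  obtain ⟨m, rfl⟩ := Nat.exists_eq_add_of_le hs
  have h1 : HasDerivAt (fun t : ℝ => 2 - t) (-1) t := (hasDerivAt_id t).const_sub 2
  have h2 := h1.pow (1 + m)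
  have h3 := h2.mul (hasDerivAt_id t)
  refine h3.congr_deriv ?_
  simp only [Nat.add_sub_cancel_left, id_eq, Pi.pow_apply]
  push_cast
  ring_nf

private lemma gMono (s : ℕ) (hs : 1 ≤ s) :
    StrictMonoOn (fun t : ℝ => (2 - t)^s * t) (Set.Icc 0 (2/(s+1))) := by
  have hsp : (0:ℝ) < s + 1 := by positivity
  apply strictMonoOn_of_deriv_pos (convex_Icc _ _)
  · exact (Continuous.mul (by continuity) continuous_id).continuousOn
  · intro x hx
    rw [interior_Icc, Set.mem_Ioo] at hx
    rw [(hasDerivAt_g s hs x).deriv]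
    have hx2 : x < 2 := lt_of_lt_of_le hx.2 (by
      rw [div_le_iff₀ hsp]; nlinarith [hx.1])
    have hlt : (s+1 : ℝ) * x < 2 := by
      have := (lt_div_iff₀ hsp).mp hx.2
      linarith
    have h2x : (0:ℝ) < 2 - x := by linarith
    have hp : (0:ℝ) < (2-x)^(s-1) := by positivity
    nlinarith

private lemma gAnti (s : ℕ) (hs : 1 ≤ s) :
    StrictAntiOn (fun t : ℝ => (2 - t)^s * t) (Set.Icc (2/(s+1)) 2) := by
  have hsp : (0:ℝ) < s + 1 := by positivity
  apply strictAntiOn_of_deriv_neg (convex_Icc _ _)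
  · exact (Continuous.mul (by continuity) continuous_id).continuousOn
  · intro x hx
    rw [interior_Icc, Set.mem_Ioo] at hx
    rw [(hasDerivAt_g s hs x).deriv]
    have h2x : (0:ℝ) < 2 - x := by linarith [hx.2]
    have hxpos : 0 < x := lt_of_lt_of_le (by positivity) hx.1.le
    have : 2 < (s+1:ℝ) * x := by
      have := hx.1
      rw [div_lt_iff₀ hsp] at this
      linarith
    have hp : (0:ℝ) < (2-x)^(s-1) := by positivity
    nlinarith

section gamma

variable {s : ℕ} {γ : ℝ}

private lemma gamma_lb (hs : 2 ≤ s) (h1 : 1 < γ) (h2 : γ < 2) (hroot : γ^s * (2 - γ) = 1) :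
    2 * s < γ * (s + 1) := by
  have hs1 : (1:ℕ) ≤ s := by omega
  have hsp : (0:ℝ) < s + 1 := by positivity
  by_contra h
  push_neg at h
  have hmem1 : (2 - γ) ∈ Set.Icc (2/((s:ℝ)+1)) 2 := by
    constructor
    · rw [div_le_iff₀ hsp]; nlinarith
    · linarith
  have hmem2 : (1:ℝ) ∈ Set.Icc (2/((s:ℝ)+1)) 2 := by
    constructor
    · rw [div_le_iff₀ hsp]
      have : (1:ℝ) ≤ (s:ℝ) := by exact_mod_cast hs1
      linarith
    · norm_num
  have := gAnti s hs1 hmem1 hmem2 (by linarith)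
  simp only [sub_sub_cancel] at this
  rw [hroot] at this
  norm_num at this

private lemma val_lt_one (hs : 2 ≤ s) (h1 : 1 < γ) (h2 : γ < 2) (hroot : γ^s * (2 - γ) = 1)
    {u : ℝ} (hu : γ < u) : u^s * (2 - u) < 1 := by
  have hs1 : (1:ℕ) ≤ s := by omega
  have hsp : (0:ℝ) < s + 1 := by positivity
  rcases lt_or_ge u 2 with h' | h'
  · have hlb := gamma_lb hs h1 h2 hroot
    have h2γ : 2 - γ < 2/((s:ℝ)+1) := by rw [lt_div_iff₀ hsp]; nlinarith
    have hmem1 : (2 - u) ∈ Set.Icc (0:ℝ) (2/((s:ℝ)+1)) := ⟨by linarith, by linarith⟩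
    have hmem2 : (2 - γ) ∈ Set.Icc (0:ℝ) (2/((s:ℝ)+1)) := ⟨by linarith, by linarith⟩
    have := gMono s hs1 hmem1 hmem2 (by linarith)
    simp only [sub_sub_cancel] at this
    rw [hroot] at this
    linarith
  · have : (0:ℝ) < u^s := by positivity
    nlinarith

private lemma complex_root_eq (hs : 2 ≤ s) (h1 : 1 < γ) (h2 : γ < 2)
    (hroot : γ^s * (2 - γ) = 1) {z : ℂ}
    (hz : z^(s+1) - 2*z^s + 1 = 0) (hz1 : z ≠ 1) (hznorm : 1 ≤ ‖z‖) : z = (γ:ℂ) := by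
  have hs1 : (1:ℕ) ≤ s := by omega
  have hsne : s ≠ 0 := by omega
  have hsp : (0:ℝ) < s + 1 := by positivity
  have hγ0 : 0 < γ := by linarith
  have hzs : z^s * (2 - z) = 1 := by linear_combination -hz
  have hn : ‖z‖^s * ‖2 - z‖ = 1 := by
    rw [← norm_pow, ← norm_mul, hzs, norm_one]
  set t := ‖2 - z‖ with htdef
  have htnn : 0 ≤ t := norm_nonneg _
  have hzs_ge : 1 ≤ ‖z‖^s := one_le_pow₀ hznorm
  have htpos : 0 < t := by
    rcases eq_or_lt_of_le htnn with h | h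
    · rw [← h] at hn; norm_num at hn
    · exact h
  have ht1 : t ≤ 1 := by nlinarith
  -- norms squared facts
  have hresq : (2 - z.re)^2 + z.im^2 = t^2 := by
    rw [htdef, Complex.sq_norm, Complex.normSq_apply]
    simp [Complex.sub_re, Complex.sub_im]
    ring
  have hzsq : z.re^2 + z.im^2 = ‖z‖^2 := by
    rw [Complex.sq_norm, Complex.normSq_apply]; ring
  rcases eq_or_lt_of_le ht1 with heq | hlt
  · -- t = 1 : then ‖z‖ = 1 and z = 1, contradiction
    exfalso
    have hz_eq1 : ‖z‖ = 1 := by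
      by_contra hne
      have : 1 < ‖z‖ := lt_of_le_of_ne hznorm (Ne.symm hne)
      have : 1 < ‖z‖^s := one_lt_pow₀ this hsne
      nlinarith
    apply hz1
    rw [hz_eq1] at hzsq
    rw [heq] at hresq
    norm_num at hzsq hresq
    have hre : z.re = 1 := by linear_combination (hzsq - hresq)/4
    have him : z.im = 0 := by
      have him2 : z.im^2 = 0 := by linear_combination hzsq - (z.re + 1) * hre
      exact pow_eq_zero_iff two_ne_zero |>.mp him2
    exact Complex.ext (by simp [hre]) (by simp [him])
  · -- t < 1
    have hz_lb : 2 - t ≤ ‖z‖ := by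
      have h2 : ‖(2:ℂ)‖ ≤ ‖z‖ + ‖2 - z‖ := by
        calc ‖(2:ℂ)‖ = ‖z + (2 - z)‖ := by ring_nf
          _ ≤ ‖z‖ + ‖2 - z‖ := norm_add_le _ _
      simp only [Complex.norm_ofNat] at h2
      linarith
    have hg : (2 - t)^s * t ≤ 1 := by
      have h1' : (2 - t)^s ≤ ‖z‖^s := by
        apply pow_le_pow_left₀ (by linarith) hz_lb
      nlinarith
    have hlb := gamma_lb hs h1 h2 hroot
    have h2γ : 2 - γ < 2/((s:ℝ)+1) := by rw [lt_div_iff₀ hsp]; nlinarith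
    have ht_le : t ≤ 2 - γ := by
      by_contra hcon
      push_neg at hcon
      rcases le_or_gt t (2/((s:ℝ)+1)) with h' | h'
      · have hmem1 : (2 - γ) ∈ Set.Icc (0:ℝ) (2/((s:ℝ)+1)) := ⟨by linarith, by linarith⟩
        have hmem2 : t ∈ Set.Icc (0:ℝ) (2/((s:ℝ)+1)) := ⟨htnn, h'⟩
        have := gMono s hs1 hmem1 hmem2 hcon
        simp only [sub_sub_cancel] at this
        rw [hroot] at this
        linarith
      · have hmem1 : t ∈ Set.Icc (2/((s:ℝ)+1)) 2 := ⟨h'.le, by linarith⟩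
        have hmem2 : (1:ℝ) ∈ Set.Icc (2/((s:ℝ)+1)) 2 := by
          constructor
          · rw [div_le_iff₀ hsp]
            have : (1:ℝ) ≤ (s:ℝ) := by exact_mod_cast hs1
            linarith
          · norm_num
        have := gAnti s hs1 hmem1 hmem2 hlt
        norm_num at this
        linarith
    have hz_ge : γ ≤ ‖z‖ := by linarith
    have hz_le : ‖z‖ ≤ γ := by
      by_contra hcon
      push_neg at hcon
      have hΨz : z^s = ∑ i ∈ Finset.range s, z^i := by
        have hfact : (z - 1) * (z^s - ∑ i ∈ Finset.range s, z^i) = z^(s+1) - 2*z^s + 1 := by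
          linear_combination -geom_sum_mul z s
        rw [hz] at hfact
        have hne : z - 1 ≠ 0 := sub_ne_zero.mpr hz1
        have := (mul_eq_zero.mp hfact).resolve_left hne
        exact sub_eq_zero.mp this
      have hnorm_le : ‖z‖^s ≤ ∑ i ∈ Finset.range s, ‖z‖^i := by
        calc ‖z‖^s = ‖z^s‖ := (norm_pow _ _).symm
          _ = ‖∑ i ∈ Finset.range s, z^i‖ := by rw [hΨz]
          _ ≤ ∑ i ∈ Finset.range s, ‖z^i‖ := norm_sum_le _ _
          _ = ∑ i ∈ Finset.range s, ‖z‖^i := by simp [norm_pow]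
      have hu := val_lt_one hs h1 h2 hroot hcon
      have hgs := geom_sum_mul (‖z‖) s
      have h1z : (1:ℝ) < ‖z‖ := lt_trans h1 hcon
      nlinarith [mul_nonneg (sub_nonneg.mpr hnorm_le) (sub_nonneg.mpr h1z.le), hgs, hu]
    have hz_eq : ‖z‖ = γ := le_antisymm hz_le hz_ge
    have ht_eq : t = 2 - γ := by
      have h' : γ^s * t = 1 := by rw [← hz_eq]; exact hn
      have hγs : (0:ℝ) < γ^s := by positivity
      exact mul_left_cancel₀ (ne_of_gt hγs) (h'.trans hroot.symm)
    rw [hz_eq] at hzsq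
    rw [ht_eq] at hresq
    have hre : z.re = γ := by linear_combination (hzsq - hresq)/4
    have him : z.im = 0 := by
      have him2 : z.im^2 = 0 := by linear_combination hzsq - (z.re + γ) * hre
      exact pow_eq_zero_iff two_ne_zero |>.mp him2
    exact Complex.ext (by simp [hre]) (by simp [him])


noncomputable def Pp (s : ℕ) : Polynomial ℂ := X^(s+1) - C 2 * X^s + 1

noncomputable def psum (s n : ℕ) : ℂ := (((Pp s).roots).map (· ^ n)).sum

private lemma Pp_monic (s : ℕ) : (Pp s).Monic := by
  have h : Pp s = X^(s+1) + (1 - C 2 * X^s) := by unfold Pp; ring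
  rw [h]
  apply monic_X_pow_add
  apply lt_of_le_of_lt (degree_sub_le _ _)
  have h1 : degree (1 : ℂ[X]) < (s+1 : ℕ) := by
    rw [degree_one]; exact_mod_cast WithBot.coe_lt_coe.mpr (by omega)
  have h2 : degree (C 2 * X^s : ℂ[X]) < (s+1 : ℕ) := by
    apply lt_of_le_of_lt (degree_C_mul_X_pow_le _ _)
    exact_mod_cast WithBot.coe_lt_coe.mpr (by omega)
  exact max_lt h1 h2

private lemma Pp_natDegree (s : ℕ) : (Pp s).natDegree = s + 1 := by
  unfold Pp; compute_degree!

private lemma mem_roots_Pp {s : ℕ} {z : ℂ} :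
    z ∈ (Pp s).roots ↔ z^(s+1) - 2*z^s + 1 = 0 := by
  rw [mem_roots ((Pp_monic s).ne_zero)]
  unfold Pp
  simp [IsRoot]

private lemma card_roots_Pp (s : ℕ) : Multiset.card (Pp s).roots = s + 1 := by
  rw [splits_iff_card_roots.mp (IsAlgClosed.splits _), Pp_natDegree]

private lemma psum_zero (s : ℕ) : psum s 0 = (s:ℂ) + 1 := by
  unfold psum
  simp only [pow_zero]
  rw [Multiset.map_const', Multiset.sum_replicate, card_roots_Pp]
  push_cast
  ring

private lemma psum_rec_high (s : ℕ) (m : ℕ) :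
    psum s (m+s+1) + psum s m = 2 * psum s (m+s) := by
  unfold psum
  rw [← Multiset.sum_map_add, ← Multiset.sum_map_mul_left]
  apply congrArg Multiset.sum
  apply Multiset.map_congr rfl
  intro z hz
  have hroot := mem_roots_Pp.mp hz
  linear_combination z^m * hroot

private lemma sum_map_sub (M : Multiset ℂ) (A B : ℂ → ℂ[X]) :
    (M.map fun z => A z - B z).sum = (M.map A).sum - (M.map B).sum := by
  induction M using Multiset.induction_on with
  | empty => simp
  | cons a M ih => simp only [Multiset.map_cons, Multiset.sum_cons, ih]; ring

private lemma multiset_finset_swap (M : Multiset ℂ) (r : Finset ℕ) (f : ℕ → ℂ → ℂ[X]) :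
    (M.map fun z => ∑ i ∈ r, f i z).sum = ∑ i ∈ r, (M.map (f i)).sum := by
  induction M using Multiset.induction_on with
  | empty => simp
  | cons a M ih => simp [Multiset.map_cons, Multiset.sum_cons, ih, Finset.sum_add_distrib]

private lemma sum_map_C_pow (M : Multiset ℂ) (e : ℕ) :
    (M.map fun z => C (z^e)).sum = C ((M.map (· ^ e)).sum) := by
  rw [map_multiset_sum (C : ℂ →+* ℂ[X]), Multiset.map_map]
  rfl

private lemma PderivEq (s : ℕ) :
    C ((s:ℂ)+1) * X^s - C 2 * (C (s:ℂ) * X^(s-1)) =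
    ((Pp s).roots.map (fun z =>
      (∑ i ∈ Finset.range (s+1), X^i * C (z^(s-i)))
        - C 2 * ∑ i ∈ Finset.range s, X^i * C (z^(s-1-i)))).sum := by
  have h1 : derivative (Pp s) = C ((s:ℂ)+1) * X^s - C 2 * (C (s:ℂ) * X^(s-1)) := by
    unfold Pp
    rw [derivative_add, derivative_sub, derivative_one, derivative_X_pow, derivative_C_mul,
      derivative_X_pow]
    push_cast
    simp
  rw [← h1]
  conv_lhs => rw [(IsAlgClosed.splits (Pp s)).eq_prod_roots_of_monic (Pp_monic s)]
  rw [derivative_prod]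
  apply congrArg Multiset.sum
  apply Multiset.map_congr rfl
  intro z hz
  rw [derivative_X_sub_C, mul_one]
  have hL : (X - C z) * ((Multiset.map (fun w => X - C w) ((Pp s).roots.erase z)).prod) = Pp s := by
    calc (X - C z) * ((Multiset.map (fun w => X - C w) ((Pp s).roots.erase z)).prod)
        = (Multiset.map (fun w => X - C w) (z ::ₘ (Pp s).roots.erase z)).prod := by
          rw [Multiset.map_cons, Multiset.prod_cons]
      _ = Pp s := by
          rw [Multiset.cons_erase hz]
          exact ((IsAlgClosed.splits (Pp s)).eq_prod_roots_of_monic (Pp_monic s)).symm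
  have hroot := mem_roots_Pp.mp hz
  have hCroot : (C z)^(s+1) - C 2 * (C z)^s + 1 = (0 : ℂ[X]) := by
    have h := congrArg C hroot
    simpa [map_sub, map_add, map_mul, map_pow, map_one] using h
  have hR : (X - C z) * ((∑ i ∈ Finset.range (s+1), X^i * C (z^(s-i)))
        - C 2 * ∑ i ∈ Finset.range s, X^i * C (z^(s-1-i))) = Pp s := by
    simp only [map_pow]
    have e1 := geom_sum₂_mul (X : ℂ[X]) (C z) (s+1)
    have e2 := geom_sum₂_mul (X : ℂ[X]) (C z) s
    simp only [Nat.add_sub_cancel] at e1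
    unfold Pp
    linear_combination e1 - C 2 * e2 - hCroot
  exact mul_left_cancel₀ (X_sub_C_ne_zero z) (hL.trans hR.symm)

private lemma PderivEq2 (s : ℕ) :
    C ((s:ℂ)+1) * X^s - C 2 * (C (s:ℂ) * X^(s-1)) =
      (∑ i ∈ Finset.range (s+1), X^i * C (psum s (s-i)))
        - C 2 * ∑ i ∈ Finset.range s, X^i * C (psum s (s-1-i)) := by
  rw [PderivEq s, sum_map_sub]
  congr 1
  · rw [multiset_finset_swap]
    apply Finset.sum_congr rfl
    intro i _
    rw [Multiset.sum_map_mul_left, sum_map_C_pow]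
    rfl
  · rw [Multiset.sum_map_mul_left]
    congr 1
    rw [multiset_finset_swap]
    apply Finset.sum_congr rfl
    intro i _
    rw [Multiset.sum_map_mul_left, sum_map_C_pow]
    rfl

private lemma psum_low (s : ℕ) {j : ℕ} (hj : j < s) :
    psum s (s-j) - 2 * psum s (s-1-j) = if j = s-1 then -(2*(s:ℂ)) else 0 := by
  have h := congrArg (fun p : ℂ[X] => p.coeff j) (PderivEq2 s)
  simp only [coeff_sub, coeff_C_mul, coeff_X_pow, finset_sum_coeff, coeff_mul_C,
    ite_mul, one_mul, zero_mul, Finset.sum_ite_eq, Finset.mem_range] at h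
  rw [if_neg (by omega : ¬ j = s), if_pos (by omega : j < s + 1), if_pos hj] at h
  rcases eq_or_ne j (s-1) with he | he
  · simp only [if_pos he] at h ⊢
    linear_combination -h
  · simp only [if_neg he] at h ⊢
    linear_combination -h

private lemma psum_one (s : ℕ) (hs : 2 ≤ s) : psum s 1 = 2 := by
  have h := psum_low s (j := s-1) (by omega)
  rw [if_pos rfl] at h
  have e1 : s - (s-1) = 1 := by omega
  have e2 : s - 1 - (s-1) = 0 := by omega
  rw [e1, e2, psum_zero] at h
  linear_combination h

private lemma psum_low' (s : ℕ) {n : ℕ} (h2 : 2 ≤ n) (hn : n ≤ s) :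
    psum s n = 2 * psum s (n-1) := by
  have h := psum_low s (j := s-n) (by omega)
  rw [if_neg (by omega)] at h
  have e1 : s - (s-n) = n := by omega
  have e2 : s - 1 - (s-n) = n - 1 := by omega
  rw [e1, e2] at h
  linear_combination h

private lemma psum_int (s : ℕ) (hs : 2 ≤ s) (n : ℕ) : ∃ m : ℤ, psum s n = m := by
  induction n using Nat.strong_induction_on with
  | _ n ih =>
    rcases Nat.lt_or_ge n 2 with h2 | h2
    · interval_cases n
      · exact ⟨(s:ℤ)+1, by rw [psum_zero]; push_cast; ring⟩
      · exact ⟨2, by rw [psum_one s hs]; norm_num⟩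
    rcases Nat.lt_or_ge n (s+1) with hn | hn
    · obtain ⟨m, hm⟩ := ih (n-1) (by omega)
      exact ⟨2*m, by rw [psum_low' s h2 (by omega), hm]; push_cast; ring⟩
    · obtain ⟨m1, hm1⟩ := ih (n-1) (by omega)
      obtain ⟨m2, hm2⟩ := ih (n-s-1) (by omega)
      have h := psum_rec_high s (n-s-1)
      have e1 : n-s-1+s+1 = n := by omega
      have e2 : n-s-1+s = n-1 := by omega
      rw [e1, e2, hm1, hm2] at h
      exact ⟨2*m1 - m2, by push_cast; linear_combination h⟩



private lemma Pp_deriv (s : ℕ) :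
    derivative (Pp s) = C ((s:ℂ)+1) * X^s - C 2 * (C (s:ℂ) * X^(s-1)) := by
  unfold Pp
  rw [derivative_add, derivative_sub, derivative_one, derivative_X_pow, derivative_C_mul,
    derivative_X_pow]
  push_cast
  simp

private lemma count_simple (s : ℕ) {z : ℂ} (hz : z ∈ (Pp s).roots)
    (hd : eval z (derivative (Pp s)) ≠ 0) : (Pp s).roots.count z = 1 := by
  classical
  have h1 : 1 ≤ (Pp s).roots.count z := Multiset.one_le_count_iff_mem.mpr hz
  rcases Nat.lt_or_ge ((Pp s).roots.count z) 2 with h | h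
  · omega
  exfalso
  rw [count_roots] at h
  have hdvd : (X - C z)^2 ∣ Pp s :=
    dvd_trans (pow_dvd_pow _ h) (pow_rootMultiplicity_dvd (Pp s) z)
  obtain ⟨g, hg⟩ := hdvd
  apply hd
  rw [hg]
  simp [derivative_mul, derivative_pow, eval_mul, eval_add, eval_pow, eval_sub]

private lemma roots_ne_zero {s : ℕ} (hs : 1 ≤ s) {z : ℂ} (hz : z ∈ (Pp s).roots) : z ≠ 0 := by
  intro h
  rw [h] at hz
  rw [mem_roots_Pp] at hz
  rw [zero_pow (by omega : s ≠ 0), zero_pow (by omega : s + 1 ≠ 0)] at hz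
  norm_num at hz

private lemma tendsto_msum (R : Multiset ℂ) (hR : ∀ z ∈ R, ‖z‖ < 1) (c : ℕ) (hc : 1 ≤ c) :
    Tendsto (fun n => (R.map (· ^ (c*n))).sum) atTop (nhds 0) := by
  induction R using Multiset.induction_on with
  | empty => simp [tendsto_const_nhds]
  | cons a R ih =>
    simp only [Multiset.map_cons, Multiset.sum_cons]
    have ha : ‖a‖ < 1 := hR a (Multiset.mem_cons_self _ _)
    have h1 : Tendsto (fun n => a^(c*n)) atTop (nhds 0) := by
      have hbase := tendsto_pow_atTop_nhds_zero_of_norm_lt_one ha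
      have hcomp : Tendsto (fun n : ℕ => c*n) atTop atTop :=
        tendsto_atTop_mono (fun n => Nat.le_mul_of_pos_left n (by omega)) tendsto_id
      exact hbase.comp hcomp
    have h2 := ih (fun z hz => hR z (Multiset.mem_cons_of_mem hz))
    simpa using h1.add h2

private lemma multiset_finset_swap' (M : Multiset ℂ) (r : Finset ℕ) (f : ℕ → ℂ → ℂ) :
    (M.map fun z => ∑ i ∈ r, f i z).sum = ∑ i ∈ r, (M.map (f i)).sum := by
  induction M using Multiset.induction_on with
  | empty => simp
  | cons a M ih => simp [Multiset.map_cons, Multiset.sum_cons, ih, Finset.sum_add_distrib]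

/-- For k > ℓ ≥ 2, the number log α(k) / log α(ℓ) is irrational, where α(s) is
    the dominant root of Ψ_s(x) = x^s − x^(s−1) − ... − x − 1 in (1, 2). -/
theorem log_ratio_irrational (k l : ℕ) (hl : 2 ≤ l) (hkl : l < k)
    (α β : ℝ) (hα1 : 1 < α) (hα2 : α < 2)
    (hαroot : α ^ k = ∑ i ∈ Finset.range k, α ^ i)
    (hβ1 : 1 < β) (hβ2 : β < 2)
    (hβroot : β ^ l = ∑ i ∈ Finset.range l, β ^ i) :
    Irrational (Real.log α / Real.log β) := by
  classical
  have hk : 2 ≤ k := by omega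
  have hαr : α^k * (2 - α) = 1 := by
    linear_combination -geom_sum_mul α k + (1 - α) * hαroot
  have hβr : β^l * (2 - β) = 1 := by
    linear_combination -geom_sum_mul β l + (1 - β) * hβroot
  rintro ⟨r, hr⟩
  have hlogα : 0 < Real.log α := Real.log_pos hα1
  have hlogβ : 0 < Real.log β := Real.log_pos hβ1
  obtain ⟨p, q, hp1, hq1, hαβq⟩ : ∃ (p q : ℕ), 1 ≤ p ∧ 1 ≤ q ∧ α ^ q = β ^ p := by
    have hrpos : 0 < r := by
      have h0 : (0:ℝ) < r := by rw [hr]; exact div_pos hlogα hlogβ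
      exact_mod_cast h0
    have hnum : (0:ℤ) < r.num := Rat.num_pos.mpr hrpos
    refine ⟨r.num.toNat, r.den, by omega, r.pos, ?_⟩
    have hpn : ((r.num.toNat : ℕ) : ℝ) = ((r.num : ℤ) : ℝ) := by
      exact_mod_cast congrArg (fun z : ℤ => (z:ℝ)) (Int.toNat_of_nonneg hnum.le)
    have hq0 : ((r.den : ℕ) : ℝ) ≠ 0 := Nat.cast_ne_zero.mpr (by exact_mod_cast r.pos.ne')
    rw [Rat.cast_def] at hr
    have hlogrel : ((r.den:ℕ):ℝ) * Real.log α = ((r.num.toNat:ℕ):ℝ) * Real.log β := by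
      rw [hpn]
      field_simp at hr
      linarith [hr]
    have h1 : α ^ r.den = Real.exp (((r.den:ℕ):ℝ) * Real.log α) := by
      rw [← Real.log_pow, Real.exp_log (by positivity)]
    have h2 : β ^ r.num.toNat = Real.exp (((r.num.toNat:ℕ):ℝ) * Real.log β) := by
      rw [← Real.log_pow, Real.exp_log (by positivity)]
    rw [h1, h2, hlogrel]
  clear hr
  have hα0 : (0:ℝ) < α := by linarith
  have hβ0 : (0:ℝ) < β := by linarith
  have hαmemR : α^(k+1) - 2*α^k + 1 = 0 := by linear_combination -hαr
  have hβmemR : β^(l+1) - 2*β^l + 1 = 0 := by linear_combination -hβr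
  have hαmem : (α:ℂ) ∈ (Pp k).roots := by
    rw [mem_roots_Pp]
    exact_mod_cast congrArg (fun x : ℝ => (x:ℂ)) hαmemR
  have hβmem : (β:ℂ) ∈ (Pp l).roots := by
    rw [mem_roots_Pp]
    exact_mod_cast congrArg (fun x : ℝ => (x:ℂ)) hβmemR
  have h1memk : (1:ℂ) ∈ (Pp k).roots := by rw [mem_roots_Pp]; ring
  have h1meml : (1:ℂ) ∈ (Pp l).roots := by rw [mem_roots_Pp]; ring
  have hαne1 : (α:ℂ) ≠ 1 := by exact_mod_cast hα1.ne'
  have hβne1 : (β:ℂ) ≠ 1 := by exact_mod_cast hβ1.ne'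
  -- simplicity of the roots 1 and the dominant root
  have hcount1 : ∀ s : ℕ, 2 ≤ s → (1:ℂ) ∈ (Pp s).roots → (Pp s).roots.count 1 = 1 := by
    intro s hs hmem
    apply count_simple s hmem
    rw [Pp_deriv]
    simp only [eval_sub, eval_mul, eval_pow, eval_X, eval_C, one_pow, mul_one]
    intro h
    have h2 : (s:ℂ) = 1 := by linear_combination -h
    have : s = 1 := by exact_mod_cast h2
    omega
  have hcountdom : ∀ (s : ℕ) (γ : ℝ), 2 ≤ s → 1 < γ → γ < 2 → γ^s * (2-γ) = 1 →
      (γ:ℂ) ∈ (Pp s).roots → (Pp s).roots.count (γ:ℂ) = 1 := by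
    intro s γ hs hγ1 hγ2 hγr hmem
    apply count_simple s hmem
    rw [Pp_deriv]
    simp only [eval_sub, eval_mul, eval_pow, eval_X, eval_C]
    have hlb := gamma_lb hs hγ1 hγ2 hγr
    have hγ0 : (0:ℝ) < γ := by linarith
    have hpow : γ^s = γ^(s-1) * γ := by rw [← pow_succ]; congr 1; omega
    have hreal : ((s:ℝ)+1) * γ^s - 2*((s:ℝ)*γ^(s-1)) > 0 := by
      rw [hpow]
      have hp := pow_pos hγ0 (s-1)
      nlinarith
    intro h
    have h2 : ((s:ℝ)+1) * γ^s - 2*((s:ℝ)*γ^(s-1)) = 0 := by exact_mod_cast h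
    linarith
  -- decompose the root multisets
  have hdecomp : ∀ (s : ℕ) (γ : ℝ), 2 ≤ s → 1 < γ → γ < 2 → γ^s * (2-γ) = 1 →
      (γ:ℂ) ∈ (Pp s).roots → (1:ℂ) ∈ (Pp s).roots → (γ:ℂ) ≠ 1 →
      ∃ R : Multiset ℂ, (Pp s).roots = (γ:ℂ) ::ₘ (1:ℂ) ::ₘ R ∧ ∀ z ∈ R, ‖z‖ < 1 := by
    intro s γ hs hγ1 hγ2 hγr hγmem h1mem hγne1
    have h1e : (1:ℂ) ∈ ((Pp s).roots).erase (γ:ℂ) :=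
      (Multiset.mem_erase_of_ne hγne1.symm).mpr h1mem
    refine ⟨(((Pp s).roots).erase (γ:ℂ)).erase 1, ?_, ?_⟩
    · rw [Multiset.cons_erase h1e, Multiset.cons_erase hγmem]
    · intro z hz
      have hdk : (Pp s).roots = (γ:ℂ) ::ₘ (1:ℂ) ::ₘ (((Pp s).roots).erase (γ:ℂ)).erase 1 := by
        rw [Multiset.cons_erase h1e, Multiset.cons_erase hγmem]
      have hγnotin : (γ:ℂ) ∉ (((Pp s).roots).erase (γ:ℂ)).erase 1 := by
        intro hmem
        have hc := hcountdom s γ hs hγ1 hγ2 hγr hγmem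
        rw [hdk, Multiset.count_cons_self, Multiset.count_cons_of_ne hγne1] at hc
        have := Multiset.count_pos.mpr hmem
        omega
      have h1notin : (1:ℂ) ∉ (((Pp s).roots).erase (γ:ℂ)).erase 1 := by
        intro hmem
        have hc := hcount1 s hs h1mem
        rw [hdk, Multiset.count_cons_of_ne hγne1.symm, Multiset.count_cons_self] at hc
        have := Multiset.count_pos.mpr hmem
        omega
      by_contra hge
      push_neg at hge
      have hzmem : z ∈ (Pp s).roots :=
        Multiset.mem_of_mem_erase (Multiset.mem_of_mem_erase hz)
      have hz1 : z ≠ 1 := fun h => h1notin (h ▸ hz)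
      have hzγ : z ≠ (γ:ℂ) := fun h => hγnotin (h ▸ hz)
      exact hzγ (complex_root_eq hs hγ1 hγ2 hγr (mem_roots_Pp.mp hzmem) hz1 hge)
  obtain ⟨Rk, hRk, hRksmall⟩ := hdecomp k α hk hα1 hα2 hαr hαmem h1memk hαne1
  obtain ⟨Sl, hSl, hSlsmall⟩ := hdecomp l β hl hβ1 hβ2 hβr hβmem h1meml hβne1
  have hpk : ∀ m, psum k m = (α:ℂ)^m + 1 + (Rk.map (· ^ m)).sum := by
    intro m
    show (((Pp k).roots).map (· ^ m)).sum = _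
    rw [hRk]
    simp only [Multiset.map_cons, Multiset.sum_cons, one_pow]
    ring
  have hpl : ∀ m, psum l m = (β:ℂ)^m + 1 + (Sl.map (· ^ m)).sum := by
    intro m
    show (((Pp l).roots).map (· ^ m)).sum = _
    rw [hSl]
    simp only [Multiset.map_cons, Multiset.sum_cons, one_pow]
    ring
  set G : ℕ → ℂ := fun n => psum k (q*n) - psum l (p*n) with hG
  have hαβC : ((α:ℂ))^q = ((β:ℂ))^p := by
    exact_mod_cast congrArg (fun x : ℝ => (x:ℂ)) hαβq
  have hGeq : ∀ n, G n = (Rk.map (· ^ (q*n))).sum - (Sl.map (· ^ (p*n))).sum := by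
    intro n
    have hcancel : (α:ℂ)^(q*n) = (β:ℂ)^(p*n) := by rw [pow_mul, pow_mul, hαβC]
    simp only [hG]
    rw [hpk (q*n), hpl (p*n), hcancel]
    ring
  have hGlim : Tendsto G atTop (nhds 0) := by
    have h := (tendsto_msum Rk hRksmall q hq1).sub (tendsto_msum Sl hSlsmall p hp1)
    rw [sub_zero] at h
    exact h.congr (fun n => (hGeq n).symm)
  have hGint : ∀ n, ∃ m : ℤ, G n = m := by
    intro n
    obtain ⟨m1, h1⟩ := psum_int k hk (q*n)
    obtain ⟨m2, h2⟩ := psum_int l hl (p*n)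
    exact ⟨m1 - m2, by simp only [hG]; rw [h1, h2]; push_cast; ring⟩
  obtain ⟨N, hN⟩ : ∃ N, ∀ n ≥ N, G n = 0 := by
    obtain ⟨N, hN⟩ := Metric.tendsto_atTop.mp hGlim (1/2) (by norm_num)
    refine ⟨N, fun n hn => ?_⟩
    obtain ⟨m, hm⟩ := hGint n
    have hd := hN n hn
    rw [dist_zero_right, hm] at hd
    have hmabs : |(m:ℝ)| < 1 := by
      have : ‖(m:ℂ)‖ = |(m:ℝ)| := by
        rw [← Complex.ofReal_intCast, Complex.norm_real, Real.norm_eq_abs]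
      linarith [this ▸ hd]
    have hm0 : m = 0 := by
      have habs : |m| < 1 := by
        have h2 : ((|m| : ℤ) : ℝ) < 1 := by rw [Int.cast_abs]; exact hmabs
        exact_mod_cast h2
      rwa [Int.abs_lt_one_iff] at habs
    rw [hm, hm0]
    simp
  -- the combined characteristic polynomial
  set T : Multiset ℂ := ((Pp k).roots.map (· ^ q)) + ((Pp l).roots.map (· ^ p)) with hT
  set Q : Polynomial ℂ := (T.map fun μ => X - C μ).prod with hQdef
  set D : ℕ := Multiset.card T with hD
  have hQdeg : Q.natDegree = D := by
    rw [hQdef, natDegree_multiset_prod_X_sub_C_eq_card, hD]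
  have hTne0 : ∀ μ ∈ T, μ ≠ 0 := by
    intro μ hμ
    rw [hT, Multiset.mem_add] at hμ
    rcases hμ with h | h
    · obtain ⟨z, hz, rfl⟩ := Multiset.mem_map.mp h
      exact pow_ne_zero _ (roots_ne_zero (by omega) hz)
    · obtain ⟨z, hz, rfl⟩ := Multiset.mem_map.mp h
      exact pow_ne_zero _ (roots_ne_zero (by omega) hz)
  have hQeval : ∀ μ ∈ T, eval μ Q = 0 := by
    intro μ hμ
    rw [hQdef, eval_multiset_prod, Multiset.map_map]
    apply Multiset.prod_eq_zero
    exact Multiset.mem_map.mpr ⟨μ, hμ, by simp⟩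
  have hQ0 : Q.coeff 0 ≠ 0 := by
    rw [coeff_zero_eq_eval_zero, hQdef, eval_multiset_prod, Multiset.map_map]
    apply Multiset.prod_ne_zero
    rintro hmem
    obtain ⟨μ, hμ, h0⟩ := Multiset.mem_map.mp hmem
    simp only [Function.comp_apply, eval_sub, eval_X, eval_C, zero_sub, neg_eq_zero] at h0
    exact hTne0 μ hμ h0
  have hrootsum : ∀ μ ∈ T, ∀ n : ℕ, ∑ i ∈ Finset.range (D+1), Q.coeff i * μ^(n+i) = 0 := by
    intro μ hμ n
    have he : eval μ Q = ∑ i ∈ Finset.range (D+1), Q.coeff i * μ^i :=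
      eval_eq_sum_range' (by omega) μ
    calc ∑ i ∈ Finset.range (D+1), Q.coeff i * μ^(n+i)
        = μ^n * ∑ i ∈ Finset.range (D+1), Q.coeff i * μ^i := by
          rw [Finset.mul_sum]
          apply Finset.sum_congr rfl
          intro i _
          rw [pow_add]
          ring
      _ = 0 := by rw [← he, hQeval μ hμ, mul_zero]
  have hGrec : ∀ n, ∑ i ∈ Finset.range (D+1), Q.coeff i * G (n+i) = 0 := by
    intro n
    have hsplit : ∀ (s' c : ℕ), 1 ≤ s' → (∀ z ∈ (Pp s').roots, z^c ∈ T) →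
        ∑ i ∈ Finset.range (D+1), Q.coeff i * psum s' (c*(n+i)) = 0 := by
      intro s' c hs' hmem
      have hps : ∀ i : ℕ, psum s' (c*(n+i)) = (((Pp s').roots).map fun z => (z^c)^(n+i)).sum := by
        intro i
        show (((Pp s').roots).map (· ^ (c*(n+i)))).sum = _
        apply congrArg
        apply Multiset.map_congr rfl
        intro z _
        exact pow_mul z c (n+i)
      calc ∑ i ∈ Finset.range (D+1), Q.coeff i * psum s' (c*(n+i))
          = ∑ i ∈ Finset.range (D+1), (((Pp s').roots).map fun z => Q.coeff i * (z^c)^(n+i)).sum := by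
            apply Finset.sum_congr rfl
            intro i _
            rw [hps i, ← Multiset.sum_map_mul_left]
        _ = (((Pp s').roots).map fun z => ∑ i ∈ Finset.range (D+1), Q.coeff i * (z^c)^(n+i)).sum := by
            rw [multiset_finset_swap']
        _ = (((Pp s').roots).map fun _ => (0:ℂ)).sum := by
            apply congrArg
            apply Multiset.map_congr rfl
            intro z hz
            exact hrootsum (z^c) (hmem z hz) n
        _ = 0 := by simp
    have hk' := hsplit k q (by omega) (fun z hz => by
      rw [hT]; exact Multiset.mem_add.mpr (Or.inl (Multiset.mem_map_of_mem _ hz)))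
    have hl' := hsplit l p (by omega) (fun z hz => by
      rw [hT]; exact Multiset.mem_add.mpr (Or.inr (Multiset.mem_map_of_mem _ hz)))
    calc ∑ i ∈ Finset.range (D+1), Q.coeff i * G (n+i)
        = ∑ i ∈ Finset.range (D+1),
            (Q.coeff i * psum k (q*(n+i)) - Q.coeff i * psum l (p*(n+i))) := by
          apply Finset.sum_congr rfl
          intro i _
          simp only [hG]
          ring
      _ = 0 := by rw [Finset.sum_sub_distrib, hk', hl', sub_zero]
  have hzero : ∀ j, ∀ m, N ≤ m + j → G m = 0 := by
    intro j
    induction j with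
    | zero => intro m hm; exact hN m (by omega)
    | succ j ih =>
      intro m hm
      rcases Nat.lt_or_ge (m + j) N with hlt | hge
      · have hrec := hGrec m
        rw [Finset.sum_eq_single 0 (fun i _ hi => by
              rw [ih (m+i) (by omega), mul_zero])
            (fun h => absurd (Finset.mem_range.mpr (by omega)) h)] at hrec
        simpa using (mul_eq_zero.mp hrec).resolve_left hQ0
      · exact ih m hge
  have hG0 := hzero N 0 (by omega)
  simp only [hG, Nat.mul_zero, psum_zero] at hG0
  have : (k:ℂ) = (l:ℂ) := by linear_combination hG0
  have : k = l := by exact_mod_cast this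
  omega
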